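/- For every r > 0 there exists a constant c > 0 (depending only on r) such that for every point p of the upper half-plane and every L ≥ 1 there exists a finite set S of points, contained in the annulus B_H(p, L) \ B_H(p, L/2), whose points are pairwise at hyperbolic distance greater than 2r, and whose cardinality satisfies #S ≥ c · μ(B_H(p, L)). (The packing lower bound (equation (Nbig)) in the proof of Theorem 1.1.) -/

import Mathlib

set_option maxHeartbeats 1000000

open UpperHalfPlane MeasureTheory

/-- The hyperbolic area of a subset of the upper half-plane: the measure with density
`1 / y²` with respect to two-dimensional Lebesgue measure, applied to the image of the
set under the coordinate chart `z ↦ (Re z, Im z)`. -/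
noncomputable def hypArea (A : Set UpperHalfPlane) : ENNReal :=
  (volume.withDensity fun p : ℝ × ℝ => ENNReal.ofReal (1 / p.2 ^ 2))
    ((fun z : UpperHalfPlane => (z.re, z.im)) '' A)

open Real Set MeasureTheory UpperHalfPlane

private lemma lint_inv_sq {b : ℝ} (hb : 0 < b) :
    ∫⁻ y in Set.Ici b, ENNReal.ofReal (1 / y ^ 2) = ENNReal.ofReal (1 / b) := by
  rw [← setLIntegral_congr (Ioi_ae_eq_Ici (a := b) (μ := volume))]
  have heq : Set.EqOn (fun y : ℝ => y ^ (-2 : ℝ)) (fun y => 1 / y ^ 2) (Set.Ioi b) := by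
    intro x hx
    have hx0 : 0 < x := hb.trans hx
    simp only
    rw [show (-2 : ℝ) = -(2:ℕ) by norm_num, Real.rpow_neg hx0.le, Real.rpow_natCast, one_div]
  have hint : IntegrableOn (fun y : ℝ => 1 / y ^ 2) (Ioi b) :=
    (integrableOn_Ioi_rpow_of_lt (by norm_num) hb).congr_fun heq measurableSet_Ioi
  rw [← ofReal_integral_eq_lintegral_ofReal hint
    (Filter.Eventually.of_forall fun y => by positivity)]
  congr 1
  rw [← setIntegral_congr_fun measurableSet_Ioi heq,
    integral_Ioi_rpow_of_lt (by norm_num) hb]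
  rw [show (-2:ℝ)+1 = -1 by norm_num, Real.rpow_neg_one]
  norm_num

private lemma coshd (z w : UpperHalfPlane) :
    Real.cosh (dist z w)
      = 1 + ((z.re - w.re) ^ 2 + (z.im - w.im) ^ 2) / (2 * z.im * w.im) := by
  rw [UpperHalfPlane.cosh_dist, Complex.dist_eq, Complex.sq_norm, Complex.normSq_apply,
    Complex.sub_re, Complex.sub_im, UpperHalfPlane.coe_re, UpperHalfPlane.coe_im,
    UpperHalfPlane.coe_re, UpperHalfPlane.coe_im]
  ring

private lemma area_bound (p : UpperHalfPlane) (L : ℝ) (hL : 1 ≤ L) :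
    hypArea (Metric.closedBall p L) ≤ ENNReal.ofReal (4 * Real.exp L) := by
  have hm : 0 < p.im := p.im_pos
  set m := p.im with hm'
  set x0 := p.re with hx0'
  set T := Real.exp L with hT'
  have hT0 : 0 < T := Real.exp_pos L
  have hT1 : 1 < T := by
    rw [hT', show (1:ℝ) = Real.exp 0 by simp]
    exact Real.exp_lt_exp.2 (by linarith)
  have hTinv : T * T⁻¹ = 1 := mul_inv_cancel₀ hT0.ne'
  have hTinv1 : T⁻¹ < 1 := by
    rw [inv_lt_one_iff₀]; right; exact hT1
  set a := m / T with ha'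
  have ha : 0 < a := div_pos hm hT0
  set B2 := m * (T - T⁻¹) with hB2'
  have hB2 : 0 < B2 := mul_pos hm (by linarith)
  set E : Set (ℝ × ℝ) := {q | a + (q.1 - x0) ^ 2 / B2 ≤ q.2} with hE'
  have hEmeas : MeasurableSet E := by
    apply measurableSet_le _ measurable_snd
    fun_prop
  have hcoshL : Real.cosh L = (T + T⁻¹) / 2 := by
    rw [Real.cosh_eq, hT', ← Real.exp_neg]
  -- image of ball is contained in E
  have hsub : (fun z : UpperHalfPlane => (z.re, z.im)) '' (Metric.closedBall p L) ⊆ E := by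
    rintro _ ⟨w, hw, rfl⟩
    have hwim : 0 < w.im := w.im_pos
    have hd : dist w p ≤ L := Metric.mem_closedBall.1 hw
    have hcosh : Real.cosh (dist w p) ≤ Real.cosh L := by
      rw [Real.cosh_le_cosh, abs_of_nonneg dist_nonneg, abs_of_nonneg (by linarith : (0:ℝ) ≤ L)]
      exact hd
    rw [coshd, hcoshL] at hcosh
    have h1 : (w.re - x0) ^ 2 + (w.im - m) ^ 2 ≤ ((T + T⁻¹) / 2 - 1) * (2 * w.im * m) := by
      rw [← sub_nonneg] at hcosh ⊢
      have h2 : 0 < 2 * w.im * m := by positivity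
      calc (0:ℝ) ≤ ((T + T⁻¹) / 2 - (1 + ((w.re - x0) ^ 2 + (w.im - m) ^ 2) / (2 * w.im * m)))
            * (2 * w.im * m) := mul_nonneg hcosh h2.le
        _ = ((T + T⁻¹) / 2 - 1) * (2 * w.im * m)
            - ((w.re - x0) ^ 2 + (w.im - m) ^ 2) := by field_simp; ring
    show a + (w.re - x0) ^ 2 / B2 ≤ w.im
    have key : (w.re - x0) ^ 2 / B2 ≤ w.im - a := by
      have hm2 : m ^ 2 * (T * T⁻¹) = m ^ 2 := by rw [hTinv, mul_one]
      rw [div_le_iff₀ hB2, hB2', ha', div_eq_mul_inv m T]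
      nlinarith [sq_nonneg (w.im - m * T⁻¹), hm2, h1, hwim, hm]
    linarith
  -- main computation
  have hdens : Measurable fun q : ℝ × ℝ => ENNReal.ofReal (1 / q.2 ^ 2) := by
    apply ENNReal.measurable_ofReal.comp
    fun_prop
  set s := Real.sqrt (B2 * a) with hs'
  have hs0 : 0 < s := Real.sqrt_pos.2 (by positivity)
  have hs2 : s ^ 2 = B2 * a := Real.sq_sqrt (by positivity)
  calc hypArea (Metric.closedBall p L)
      ≤ (volume.withDensity fun q : ℝ × ℝ => ENNReal.ofReal (1 / q.2 ^ 2)) E :=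
        measure_mono hsub
    _ = ∫⁻ q in E, ENNReal.ofReal (1 / q.2 ^ 2) := withDensity_apply _ hEmeas
    _ = ∫⁻ q : ℝ × ℝ, E.indicator (fun q : ℝ × ℝ => ENNReal.ofReal (1 / q.2 ^ 2)) q :=
        (lintegral_indicator hEmeas _).symm
    _ = ∫⁻ x : ℝ, ∫⁻ y : ℝ, E.indicator (fun q : ℝ × ℝ => ENNReal.ofReal (1 / q.2 ^ 2)) (x, y) := by
        rw [MeasureTheory.Measure.volume_eq_prod]
        exact MeasureTheory.lintegral_prod _ (hdens.indicator hEmeas).aemeasurable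
    _ = ∫⁻ x : ℝ, ENNReal.ofReal (1 / (a + (x - x0) ^ 2 / B2)) := by
        refine lintegral_congr fun x => ?_
        have hax : 0 < a + (x - x0) ^ 2 / B2 := by positivity
        have : ∀ y : ℝ, E.indicator (fun q : ℝ × ℝ => ENNReal.ofReal (1 / q.2 ^ 2)) (x, y)
            = (Set.Ici (a + (x - x0) ^ 2 / B2)).indicator
                (fun y : ℝ => ENNReal.ofReal (1 / y ^ 2)) y := by
          intro y
          simp only [Set.indicator_apply, Set.mem_Ici, hE', Set.mem_setOf_eq]
        simp_rw [this]
        rw [lintegral_indicator measurableSet_Ici _]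
        exact lint_inv_sq hax
    _ ≤ ENNReal.ofReal (4 * Real.exp L) := by
        have hrw : ∀ x : ℝ, (1:ℝ) / (a + (x - x0) ^ 2 / B2)
            = (1 / a) * (1 + ((x - x0) / s) ^ 2)⁻¹ := by
          intro x
          rw [div_pow, hs2]
          rw [one_div, one_div, ← mul_inv]
          congr 1
          field_simp
        simp_rw [hrw]
        have hint : Integrable (fun x : ℝ => (1 / a) * (1 + ((x - x0) / s) ^ 2)⁻¹) := by
          apply Integrable.const_mul
          exact (integrable_inv_one_add_sq.comp_div hs0.ne').comp_sub_right x0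
        rw [← ofReal_integral_eq_lintegral_ofReal hint
          (Filter.Eventually.of_forall fun x => by positivity)]
        apply ENNReal.ofReal_le_ofReal
        rw [MeasureTheory.integral_const_mul]
        have h1 : (∫ x : ℝ, (1 + ((x - x0) / s) ^ 2)⁻¹) = |s| * π := by
          have e1 : (∫ x : ℝ, (1 + ((x - x0) / s) ^ 2)⁻¹) = ∫ x : ℝ, (1 + (x / s) ^ 2)⁻¹ :=
            MeasureTheory.integral_sub_right_eq_self (fun t : ℝ => (1 + (t / s) ^ 2)⁻¹) x0
          have e2 : (∫ x : ℝ, (1 + (x / s) ^ 2)⁻¹) = |s| • ∫ y : ℝ, (1 + y ^ 2)⁻¹ :=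
            MeasureTheory.Measure.integral_comp_div (fun u : ℝ => (1 + u ^ 2)⁻¹) s
          rw [e1, e2, integral_univ_inv_one_add_sq, smul_eq_mul]
        rw [h1, abs_of_pos hs0]
        -- now : (1/a) * (s * π) ≤ 4 * T
        have hsle : s ≤ a * T := by
          rw [hs']
          have haT : a * T = m := by rw [ha']; field_simp
          have hkey : B2 * a ≤ (a * T) ^ 2 := by
            rw [haT, hB2', ha']
            have heq : m * (T - T⁻¹) * (m / T) = m ^ 2 * (1 - T⁻¹ * T⁻¹) := by
              field_simp
            rw [heq]
            nlinarith [mul_nonneg (mul_nonneg hm.le hm.le)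
              (mul_nonneg (inv_nonneg.2 hT0.le) (inv_nonneg.2 hT0.le))]
          calc Real.sqrt (B2 * a) ≤ Real.sqrt ((a * T) ^ 2) := Real.sqrt_le_sqrt hkey
            _ = a * T := Real.sqrt_sq (by positivity)
        have hπ : π ≤ 4 := Real.pi_le_four
        calc 1 / a * (s * π) ≤ 1 / a * ((a * T) * 4) := by
              apply mul_le_mul_of_nonneg_left _ (by positivity)
              apply mul_le_mul hsle hπ pi_pos.le (by positivity)
          _ = 4 * T := by field_simp

/-- The packing lower bound (equation (Nbig)) in the proof of Theorem 1.1: for every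
`r > 0` there is `c > 0` (depending only on `r`) such that for every point `p` and every
`L ≥ 1` there is a finite set of points of the annulus `B_H(p, L) \ B_H(p, L/2)`, pairwise
at hyperbolic distance greater than `2r`, of cardinality at least `c · μ(B_H(p, L))`. -/
theorem annulus_packing_lower_bound (r : ℝ) (hr : 0 < r) :
    ∃ c : ℝ, 0 < c ∧ ∀ (p : UpperHalfPlane) (L : ℝ), 1 ≤ L →
      ∃ S : Finset UpperHalfPlane,
        (∀ q ∈ S, q ∈ Metric.closedBall p L \ Metric.closedBall p (L / 2)) ∧
        (∀ q ∈ S, ∀ q' ∈ S, q ≠ q' → 2 * r < dist q q') ∧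
        ENNReal.ofReal c * hypArea (Metric.closedBall p L) ≤ (S.card : ENNReal) := by
  classical
  have hch : 1 < Real.cosh (2 * r) := Real.one_lt_cosh.2 (by positivity)
  set κ := Real.sqrt (2 * (Real.cosh (2 * r) - 1)) with hκ'
  have hκ : 0 < κ := Real.sqrt_pos.2 (by linarith)
  have hκ2 : κ ^ 2 = 2 * (Real.cosh (2 * r) - 1) := Real.sq_sqrt (by linarith)
  clear_value κ
  refine ⟨9 / (256 * κ), by positivity, fun p L hL => ?_⟩
  have hm : 0 < p.im := p.im_pos
  set m := p.im with hm'
  set x0 := p.re with hx0'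
  set T := Real.exp L with hT'
  have hT0 : 0 < T := Real.exp_pos L
  set u := Real.exp (1 / 4 - L) with hu'
  have hu0 : 0 < u := Real.exp_pos _
  set y1 := m * u with hy1'
  have hy1 : 0 < y1 := by rw [hy1']; exact mul_pos hm hu0
  set δ := 2 * y1 * κ with hδ'
  have hδ : 0 < δ := by rw [hδ']; exact mul_pos (mul_pos two_pos hy1) hκ
  set N := ⌊3 / 8 * m / δ⌋₊ + 1 with hN'
  set q : ℕ → UpperHalfPlane :=
    fun k => UpperHalfPlane.mk ⟨x0 + k * δ, y1⟩ (by exact hy1) with hq'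
  have hqre : ∀ k : ℕ, (q k).re = x0 + k * δ := fun k => rfl
  have hqim : ∀ k : ℕ, (q k).im = y1 := fun k => rfl
  have hqinj : Function.Injective q := by
    intro j k h
    have h2 : (q j).re = (q k).re := by rw [h]
    rw [hqre, hqre] at h2
    have h3 : (j : ℝ) = k := mul_right_cancel₀ hδ.ne' (by linarith)
    exact_mod_cast h3
  set S := (Finset.range N).image q with hS'
  have hcard : S.card = N := by
    rw [hS', Finset.card_image_of_injective _ hqinj, Finset.card_range]
  clear_value S q N δ y1 u T x0 m
  -- basic exp facts
  have hE14 : u * T = Real.exp (1 / 4) := by rw [hu', hT', ← Real.exp_add]; norm_num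
  have hcoshL : Real.cosh L = (T + T⁻¹) / 2 := by rw [Real.cosh_eq, hT', ← Real.exp_neg]
  -- bound on k * δ for k < N
  have hkδ : ∀ k : ℕ, k < N → (k : ℝ) * δ ≤ 3 / 8 * m := by
    intro k hk
    have h1 : k ≤ ⌊3 / 8 * m / δ⌋₊ := by omega
    have h2 : (k : ℝ) ≤ 3 / 8 * m / δ := by
      calc (k : ℝ) ≤ (⌊3 / 8 * m / δ⌋₊ : ℝ) := by exact_mod_cast h1
        _ ≤ 3 / 8 * m / δ := Nat.floor_le (div_nonneg (by linarith) hδ.le)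
    calc (k : ℝ) * δ ≤ 3 / 8 * m / δ * δ := by
          exact mul_le_mul_of_nonneg_right h2 hδ.le
      _ = 3 / 8 * m := div_mul_cancel₀ _ hδ.ne'
  -- the key quantity W
  have hW : 2 * u * Real.cosh L - 1 - u ^ 2
      = (Real.exp (1 / 4) - 1) * (1 - Real.exp (1 / 4 - 2 * L)) := by
    have h1 : 2 * u * Real.cosh L = Real.exp (1 / 4) + Real.exp (1 / 4 - 2 * L) := by
      rw [hcoshL, ← hE14]
      have h2 : u * T⁻¹ = Real.exp (1 / 4 - 2 * L) := by
        rw [hu', hT', ← Real.exp_neg, ← Real.exp_add]; ring_nf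
      rw [← h2]; field_simp
    have h3 : u ^ 2 = Real.exp (1 / 4) * Real.exp (1 / 4 - 2 * L) := by
      rw [hu', ← Real.exp_add, sq, ← Real.exp_add]; ring_nf
    rw [h1, h3]; ring
  have hWge : (9 : ℝ) / 64 ≤ 2 * u * Real.cosh L - 1 - u ^ 2 := by
    rw [hW]
    have hE : (5 : ℝ) / 4 ≤ Real.exp (1 / 4) := by
      have := Real.add_one_le_exp (1 / 4 : ℝ); linarith
    have hv1 : Real.exp (1 / 4 - 2 * L) ≤ Real.exp (-(7 / 4) : ℝ) :=
      Real.exp_le_exp.2 (by linarith)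
    have hv2 : Real.exp (-(7 / 4) : ℝ) ≤ 4 / 11 := by
      rw [Real.exp_neg]
      have h74 : (11 : ℝ) / 4 ≤ Real.exp (7 / 4) := by
        have := Real.add_one_le_exp (7 / 4 : ℝ); linarith
      rw [inv_le_comm₀ (by positivity) (by norm_num)]
      linarith
    have hv0 : 0 < Real.exp (1 / 4 - 2 * L) := Real.exp_pos _
    nlinarith [hv1, hv2, hE, hv0]
  -- membership facts
  have hmem : ∀ k : ℕ, k < N →
      q k ∈ Metric.closedBall p L \ Metric.closedBall p (L / 2) := by
    intro k hk
    have hcoshqk : Real.cosh (dist (q k) p)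
        = 1 + (((k : ℝ) * δ) ^ 2 + (y1 - m) ^ 2) / (2 * y1 * m) := by
      rw [coshd, hqre, hqim, ← hm', ← hx0']
      ring_nf
    constructor
    · rw [Metric.mem_closedBall]
      have hnum : ((k : ℝ) * δ) ^ 2 + (y1 - m) ^ 2 ≤ 2 * y1 * m * (Real.cosh L - 1) := by
        have h1 : ((k : ℝ) * δ) ^ 2 ≤ (3 / 8 * m) ^ 2 := by
          have := hkδ k hk
          have h0 : 0 ≤ (k : ℝ) * δ := mul_nonneg (Nat.cast_nonneg k) hδ.le
          nlinarith
        have h2 : 2 * y1 * m * (Real.cosh L - 1) - (y1 - m) ^ 2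
            = m ^ 2 * (2 * u * Real.cosh L - 1 - u ^ 2) := by
          rw [hy1']; ring
        have h3 : m ^ 2 * (9 / 64) ≤ m ^ 2 * (2 * u * Real.cosh L - 1 - u ^ 2) :=
          mul_le_mul_of_nonneg_left hWge (sq_nonneg m)
        linarith [h1, h2, h3]
      have hcosh : Real.cosh (dist (q k) p) ≤ Real.cosh L := by
        rw [hcoshqk]
        rw [← sub_nonneg]
        have h2ym : 0 < 2 * y1 * m := mul_pos (mul_pos two_pos hy1) hm
        have : (((k : ℝ) * δ) ^ 2 + (y1 - m) ^ 2) / (2 * y1 * m) ≤ Real.cosh L - 1 := by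
          rw [div_le_iff₀ h2ym]; nlinarith [hnum]
        linarith
      have h3 := Real.cosh_le_cosh.1 hcosh
      rwa [abs_of_nonneg dist_nonneg, abs_of_nonneg (by linarith : (0 : ℝ) ≤ L)] at h3
    · simp only [Metric.mem_closedBall, not_le]
      have hc1 : Real.cosh (L / 2) < Real.cosh (L - 1 / 4) := by
        rw [Real.cosh_lt_cosh, abs_of_nonneg (by linarith : (0 : ℝ) ≤ L / 2),
          abs_of_nonneg (by linarith : (0 : ℝ) ≤ L - 1 / 4)]
        linarith
      have hc2 : Real.cosh (L - 1 / 4) ≤ Real.cosh (dist (q k) p) := by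
        rw [hcoshqk]
        have he1 : Real.cosh (L - 1 / 4) = (y1 ^ 2 + m ^ 2) / (2 * y1 * m) := by
          rw [Real.cosh_eq, hy1', hu']
          have e1 : Real.exp (-(L - 1 / 4)) = Real.exp (1 / 4 - L) := by ring_nf
          have e2 : Real.exp (L - 1 / 4) = (Real.exp (1 / 4 - L))⁻¹ := by
            rw [← Real.exp_neg]; ring_nf
          rw [e1, e2]
          have h3 := Real.exp_pos (1 / 4 - L)
          field_simp
          ring
        rw [he1]
        have h2ym : 0 < 2 * y1 * m := mul_pos (mul_pos two_pos hy1) hm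
        rw [div_le_iff₀ h2ym]
        have hexp : 1 + (((k : ℝ) * δ) ^ 2 + (y1 - m) ^ 2) / (2 * y1 * m)
            = (((k : ℝ) * δ) ^ 2 + (y1 ^ 2 + m ^ 2)) / (2 * y1 * m) := by
          field_simp; ring
        rw [hexp, div_mul_cancel₀ _ h2ym.ne']
        nlinarith [sq_nonneg ((k : ℝ) * δ)]
      have h4 := Real.cosh_lt_cosh.1 (lt_of_lt_of_le hc1 hc2)
      rwa [abs_of_nonneg (by linarith : (0 : ℝ) ≤ L / 2),
        abs_of_nonneg dist_nonneg] at h4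
  refine ⟨S, ?_, ?_, ?_⟩
  · intro z hz
    rw [hS'] at hz
    obtain ⟨k, hk, rfl⟩ := Finset.mem_image.1 hz
    exact hmem k (Finset.mem_range.1 hk)
  · intro z hz z' hz' hne
    rw [hS'] at hz hz'
    obtain ⟨j, hj, rfl⟩ := Finset.mem_image.1 hz
    obtain ⟨k, hk, rfl⟩ := Finset.mem_image.1 hz'
    have hjk : j ≠ k := fun h => hne (by rw [h])
    have hjk2 : 1 ≤ ((j : ℝ) - k) ^ 2 := by
      rcases Nat.lt_or_ge j k with h | h
      · have : (j : ℝ) + 1 ≤ k := by exact_mod_cast Nat.succ_le_of_lt h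
        nlinarith
      · have h2 : k < j := lt_of_le_of_ne h (Ne.symm hjk)
        have : (k : ℝ) + 1 ≤ j := by exact_mod_cast Nat.succ_le_of_lt h2
        nlinarith
    have hcosh : Real.cosh (2 * r) < Real.cosh (dist (q j) (q k)) := by
      rw [coshd, hqre, hqre, hqim, hqim]
      have he : ((x0 + j * δ) - (x0 + k * δ)) ^ 2 + (y1 - y1) ^ 2
          = ((j : ℝ) - k) ^ 2 * δ ^ 2 := by ring
      rw [he]
      have hδ2 : δ ^ 2 = 4 * y1 ^ 2 * (2 * (Real.cosh (2 * r) - 1)) := by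
        rw [hδ', mul_pow, mul_pow, hκ2]; ring
      have h2y : 0 < 2 * y1 * y1 := mul_pos (mul_pos two_pos hy1) hy1
      have key : 2 * (Real.cosh (2 * r) - 1) * (2 * y1 * y1)
          ≤ ((j : ℝ) - k) ^ 2 * δ ^ 2 := by
        rw [hδ2]
        nlinarith [hjk2, sq_nonneg y1, hy1, hch]
      have : 2 * (Real.cosh (2 * r) - 1) ≤ ((j : ℝ) - k) ^ 2 * δ ^ 2 / (2 * y1 * y1) := by
        rw [le_div_iff₀ h2y]; linarith
      linarith
    have h4 := Real.cosh_lt_cosh.1 hcosh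
    rwa [abs_of_nonneg (by positivity : (0 : ℝ) ≤ 2 * r),
      abs_of_nonneg dist_nonneg] at h4
  · -- cardinality bound
    have h14 : Real.exp (1 / 4) ≤ 4 / 3 := by
      have h4 : Real.exp (1 / 4 : ℝ) ^ (4 : ℕ) = Real.exp 1 := by
        rw [← Real.exp_nat_mul]; norm_num
      apply le_of_pow_le_pow_left₀ (n := 4) (by norm_num) (by norm_num)
      rw [h4]
      have := Real.exp_one_lt_d9
      norm_num at this ⊢
      linarith
    have huT : u * T ≤ 4 / 3 := by rw [hE14]; exact h14
    have hNgt : 3 / 8 * m / δ < (N : ℝ) := by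
      rw [hN']
      push_cast
      exact Nat.lt_floor_add_one _
    have hδm : 3 / 8 * m / δ = 3 / (16 * (u * κ)) := by
      rw [hδ', hy1']
      field_simp
      ring
    have hfinal : 9 / (256 * κ) * (4 * Real.exp L) ≤ (N : ℝ) := by
      have h1 : 9 / (256 * κ) * (4 * T) ≤ 3 / (16 * (u * κ)) := by
        rw [div_mul_eq_mul_div, div_le_div_iff₀ (mul_pos (by norm_num) hκ)
          (mul_pos (by norm_num) (mul_pos hu0 hκ))]
        nlinarith [mul_le_mul_of_nonneg_left huT hκ.le, hκ, hT0, hu0]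
      rw [← hT']
      calc 9 / (256 * κ) * (4 * T) ≤ 3 / (16 * (u * κ)) := h1
        _ = 3 / 8 * m / δ := hδm.symm
        _ ≤ (N : ℝ) := hNgt.le
    calc ENNReal.ofReal (9 / (256 * κ)) * hypArea (Metric.closedBall p L)
        ≤ ENNReal.ofReal (9 / (256 * κ)) * ENNReal.ofReal (4 * Real.exp L) :=
          mul_le_mul_right (area_bound p L hL) _
      _ = ENNReal.ofReal (9 / (256 * κ) * (4 * Real.exp L)) :=
          (ENNReal.ofReal_mul (by positivity)).symm
      _ ≤ ENNReal.ofReal ((N : ℝ)) := ENNReal.ofReal_le_ofReal hfinal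
      _ = (N : ENNReal) := ENNReal.ofReal_natCast N
      _ = (S.card : ENNReal) := by rw [hcard]
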